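/- (Separation is suboptimal — completion time): Consider two tasks and bimodal machine times with 2α1 < α2 and 0 < p1 < 1. The 'separate' policy runs each task with its own replica at time α2 (policy [0, α2] per task), giving expected overall completion time E[T_s] = p1² α1 + (1 − p1²) α2. The 'joint' policy runs each task on one machine at time 0, and if exactly one task finishes at α1, starts a replica of the unfinished task at time α1; its expected completion time is E[T_d] = p1² α1 + 2p1²(1 − p1)(2α1) + (1 − p1)²(2p1 + 1)α2. Then E[T_d] < E[T_s]. -/
import Mathlib

/-- Separation is suboptimal (completion time): for two tasks with bimodal
machine times, 2α1 < α2 and 0 < p1 < 1, the joint policy has strictly smaller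
expected overall completion time than the separate policy:
E[T_d] = p1²α1 + 2p1²(1-p1)(2α1) + (1-p1)²(2p1+1)α2 <
E[T_s] = p1²α1 + (1-p1²)α2. -/
theorem stmt_13 (α1 α2 p1 : ℝ)
    (hα1 : 0 < α1) (hα : 2 * α1 < α2)
    (hp1 : 0 < p1) (hp1' : p1 < 1) :
    p1 ^ 2 * α1 + 2 * p1 ^ 2 * (1 - p1) * (2 * α1)
        + (1 - p1) ^ 2 * (2 * p1 + 1) * α2
      < p1 ^ 2 * α1 + (1 - p1 ^ 2) * α2 := by
  nlinarith [mul_pos (mul_pos (mul_pos hp1 hp1) (sub_pos.2 hp1')) (sub_pos.2 hα)]
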